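/- Let f_Y be a bounded continuous density on ℝ, I ⊂ ℝ compact with f_Y > 0 on I, and suppose (g_n) is a sequence of nonnegative functions with ∫ g_n(y) dy ≥ c₀ r_n², g_n(y) ≤ c₁ r_n² min{1, 1/y²} for all y, where r_n → ∞, and h_n → 0. Then inf_{x∈I} ∫ g_n(y) f_Y(x − h_n y) dy ≥ (c₀ inf_{x∈I} f_Y(x) − o(1)) r_n² as n → ∞. -/
import Mathlib
set_option maxHeartbeats 1000000


open MeasureTheory Filter Set

noncomputable def Fmin : ℝ → ℝ := fun y => min 1 (1 / y ^ 2)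

lemma Fmin_nonneg (y : ℝ) : 0 ≤ Fmin y := le_min zero_le_one (by positivity)

lemma Fmin_measurable : Measurable Fmin :=
  measurable_const.min (measurable_const.div (measurable_id.pow_const 2))

lemma Fmin_le (y : ℝ) : Fmin y ≤ 2 * (1 + y ^ 2)⁻¹ := by
  rw [← div_eq_mul_inv]
  rcases le_total (y ^ 2) 1 with hy | hy
  · refine le_trans (min_le_left _ _) ?_
    rw [le_div_iff₀ (by positivity)]
    linarith
  · refine le_trans (min_le_right _ _) ?_
    rw [div_le_div_iff₀ (by positivity) (by positivity)]
    nlinarith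

lemma Fmin_integrable : Integrable Fmin := by
  refine (integrable_inv_one_add_sq.const_mul 2).mono'
    Fmin_measurable.aestronglyMeasurable ?_
  filter_upwards with y
  rw [Real.norm_eq_abs, abs_of_nonneg (Fmin_nonneg y)]
  exact Fmin_le y

lemma Fmin_tail_small {ε : ℝ} (hε : 0 < ε) :
    ∃ T : ℝ, 0 < T ∧ ∫ y in {y : ℝ | T < |y|}, Fmin y ≤ ε := by
  set s : ℕ → Set ℝ := fun k => {y : ℝ | |y| ≤ k} with hs
  have hsm : ∀ k, MeasurableSet (s k) := fun k =>
    measurableSet_le (measurable_id.abs) measurable_const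
  have hmono : Monotone s := by
    intro a b hab y hy
    simp only [hs, mem_setOf_eq] at hy ⊢
    exact hy.trans (by exact_mod_cast hab)
  have hunion : (⋃ k, s k) = univ := by
    ext y
    simp only [mem_iUnion, mem_univ, iff_true]
    exact ⟨⌈|y|⌉₊, by simpa [hs] using Nat.le_ceil |y|⟩
  have htend := tendsto_setIntegral_of_monotone hsm hmono
    (by rw [hunion]; exact Fmin_integrable.integrableOn)
  rw [hunion, setIntegral_univ] at htend
  have : ∀ᶠ k : ℕ in atTop, (∫ y : ℝ, Fmin y) - ε < ∫ y in s k, Fmin y :=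
    htend.eventually_const_lt (by linarith)
  obtain ⟨k, hk⟩ := this.exists
  refine ⟨(k : ℝ) + 1, by positivity, ?_⟩
  have hcompl : {y : ℝ | (k : ℝ) + 1 < |y|} ⊆ (s k)ᶜ := by
    intro y hy
    simp only [hs, mem_compl_iff, mem_setOf_eq, not_le]
    have : ((k : ℝ)) < |y| := by
      simp only [mem_setOf_eq] at hy; linarith
    exact this
  have hmeas : MeasurableSet {y : ℝ | (k : ℝ) + 1 < |y|} :=
    measurableSet_lt measurable_const measurable_id.abs
  have h1 : ∫ y in {y : ℝ | (k : ℝ) + 1 < |y|}, Fmin y ≤ ∫ y in (s k)ᶜ, Fmin y := by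
    apply setIntegral_mono_set Fmin_integrable.integrableOn
      (Eventually.of_forall Fmin_nonneg) (HasSubset.Subset.eventuallyLE hcompl)
  have h2 : (∫ y in s k, Fmin y) + ∫ y in (s k)ᶜ, Fmin y = ∫ y : ℝ, Fmin y :=
    integral_add_compl (hsm k) Fmin_integrable
  linarith

/-- Abstract version of the variance lower bound step: if `f_Y` is a bounded continuous
density, positive on a compact set `I`, and `g_n ≥ 0` satisfy `∫ g_n ≥ c₀ r_n²` and
`g_n(y) ≤ c₁ r_n² min{1, 1/y²}`, with `r_n → ∞` and `h_n → 0`, then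
`inf_{x∈I} ∫ g_n(y) f_Y(x - h_n y) dy ≥ (c₀ inf_I f_Y - o(1)) r_n²`. -/
theorem stmt9 (fY : ℝ → ℝ) (hfYcont : Continuous fY) (hfYnonneg : ∀ y, 0 ≤ fY y)
    (hfYint : (∫ y : ℝ, fY y) = 1) (M : ℝ) (hfYbd : ∀ y, fY y ≤ M)
    (I : Set ℝ) (hI : IsCompact I) (hIne : I.Nonempty) (hfYpos : ∀ x ∈ I, 0 < fY x)
    (g : ℕ → ℝ → ℝ) (hgnonneg : ∀ n y, 0 ≤ g n y)
    (hgmeas : ∀ n, Measurable (g n))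
    (c₀ c₁ : ℝ) (hc₀ : 0 < c₀) (hc₁ : 0 < c₁)
    (r : ℕ → ℝ) (hrpos : ∀ n, 0 < r n) (hr : Tendsto r atTop atTop)
    (hglow : ∀ n, c₀ * r n ^ 2 ≤ ∫ y : ℝ, g n y)
    (hgup : ∀ n y, g n y ≤ c₁ * r n ^ 2 * min 1 (1 / y ^ 2))
    (h : ℕ → ℝ) (hhpos : ∀ n, 0 < h n) (hh : Tendsto h atTop (nhds 0)) :
    ∃ e : ℕ → ℝ, Tendsto e atTop (nhds 0) ∧
      ∀ n, ∀ x ∈ I,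
        (c₀ * sInf (fY '' I) - e n) * r n ^ 2 ≤ ∫ y : ℝ, g n y * fY (x - h n * y) := by
  set m := sInf (fY '' I) with hm
  have hbdd : BddBelow (fY '' I) := by
    refine ⟨0, ?_⟩; rintro _ ⟨z, hz, rfl⟩; exact hfYnonneg z
  have hm0 : 0 ≤ m := le_csInf (hIne.image fY) (by rintro _ ⟨z, hz, rfl⟩; exact hfYnonneg z)
  have hmle : ∀ x ∈ I, m ≤ fY x := fun x hx => csInf_le hbdd (mem_image_of_mem _ hx)
  have hM : 0 ≤ M := le_trans (hfYnonneg 0) (hfYbd 0)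
  have hgF : ∀ n y, g n y ≤ c₁ * r n ^ 2 * Fmin y := hgup
  have hgint : ∀ n, Integrable (g n) := by
    intro n
    refine (Fmin_integrable.const_mul (c₁ * r n ^ 2)).mono'
      (hgmeas n).aestronglyMeasurable ?_
    filter_upwards with y
    rw [Real.norm_eq_abs, abs_of_nonneg (hgnonneg n y)]
    exact hgF n y
  have hg0 : ∀ n, 0 ≤ ∫ y : ℝ, g n y := fun n =>
    le_trans (by positivity) (hglow n)
  have hgub : ∀ n, (∫ y : ℝ, g n y) ≤ c₁ * r n ^ 2 * (2 * Real.pi) := by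
    intro n
    have h1 : (∫ y : ℝ, g n y) ≤ ∫ y : ℝ, c₁ * r n ^ 2 * (2 * (1 + y ^ 2)⁻¹) := by
      refine integral_mono (hgint n)
        (((integrable_inv_one_add_sq.const_mul 2).const_mul _)) ?_
      intro y
      exact le_trans (hgF n y)
        (mul_le_mul_of_nonneg_left (Fmin_le y) (by positivity))
    calc (∫ y : ℝ, g n y) ≤ ∫ y : ℝ, c₁ * r n ^ 2 * (2 * (1 + y ^ 2)⁻¹) := h1
      _ = c₁ * r n ^ 2 * (2 * ∫ y : ℝ, (1 + y ^ 2)⁻¹) := by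
          rw [integral_const_mul, integral_const_mul]
      _ = c₁ * r n ^ 2 * (2 * Real.pi) := by rw [integral_univ_inv_one_add_sq]
  have hprodint : ∀ n (x : ℝ), Integrable (fun y => g n y * fY (x - h n * y)) := by
    intro n x
    refine ((hgint n).const_mul M).mono'
      ((hgmeas n).mul (hfYcont.measurable.comp (by fun_prop))).aestronglyMeasurable ?_
    filter_upwards with y
    rw [Real.norm_eq_abs, abs_of_nonneg (mul_nonneg (hgnonneg n y) (hfYnonneg _))]
    calc g n y * fY (x - h n * y) ≤ g n y * M :=
          mul_le_mul_of_nonneg_left (hfYbd _) (hgnonneg n y)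
      _ = M * g n y := mul_comm _ _
  have hprod0 : ∀ n (x : ℝ), 0 ≤ ∫ y : ℝ, g n y * fY (x - h n * y) := fun n x =>
    integral_nonneg fun y => mul_nonneg (hgnonneg n y) (hfYnonneg _)
  -- key eventual estimate
  have key : ∀ ε > (0 : ℝ), ∃ N : ℕ, ∀ n ≥ N, ∀ x ∈ I,
      (c₀ * m - ε) * r n ^ 2 ≤ ∫ y : ℝ, g n y * fY (x - h n * y) := by
    intro ε hε
    set K := Metric.cthickening 1 I with hKdef
    have hK : IsCompact K := hI.cthickening
    have hunif : UniformContinuousOn fY K :=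
      hK.uniformContinuousOn_of_continuous hfYcont.continuousOn
    have hπ : (0 : ℝ) < Real.pi := Real.pi_pos
    set δ' := ε / (2 * (c₁ * (2 * Real.pi) + 1)) with hδ'
    have hδ'0 : 0 < δ' := by positivity
    obtain ⟨η, hη0, hηuc⟩ := Metric.uniformContinuousOn_iff.mp hunif δ' hδ'0
    set ε' := ε / (2 * (M * c₁ + 1)) with hε'
    have hε'0 : 0 < ε' := by positivity
    obtain ⟨T, hT0, htail⟩ := Fmin_tail_small hε'0
    have hsmall : ∀ᶠ n in atTop, h n < min η 1 / T :=
      hh.eventually_lt_const (by positivity)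
    obtain ⟨N, hN⟩ := eventually_atTop.mp hsmall
    refine ⟨N, fun n hn x hx => ?_⟩
    have hmeasT : MeasurableSet {y : ℝ | T < |y|} :=
      measurableSet_lt measurable_const measurable_id.abs
    set ind : ℝ → ℝ := indicator {y : ℝ | T < |y|} Fmin with hind
    have hind0 : ∀ y, 0 ≤ ind y := fun y => indicator_nonneg (fun z _ => Fmin_nonneg z) y
    -- pointwise bound
    have hpt : ∀ y : ℝ, g n y * fY x - (δ' * g n y + M * (c₁ * r n ^ 2) * ind y)
        ≤ g n y * fY (x - h n * y) := by
      intro y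
      by_cases hy : |y| ≤ T
      · have hmem : x - h n * y ∈ K := by
          refine Metric.mem_cthickening_of_dist_le _ x 1 I hx ?_
          rw [Real.dist_eq]
          have : |x - h n * y - x| = h n * |y| := by
            rw [show x - h n * y - x = -(h n * y) by ring, abs_neg, abs_mul,
              abs_of_pos (hhpos n)]
          rw [this]
          calc h n * |y| ≤ h n * T := by
                exact mul_le_mul_of_nonneg_left hy (hhpos n).le
            _ ≤ (min η 1 / T) * T := by
                exact mul_le_mul_of_nonneg_right (hN n hn).le hT0.le
            _ = min η 1 := by field_simp
            _ ≤ 1 := min_le_right _ _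
        have hxK : x ∈ K := Metric.self_subset_cthickening I hx
        have hdist : dist x (x - h n * y) < η := by
          rw [Real.dist_eq]
          have : |x - (x - h n * y)| = h n * |y| := by
            rw [show x - (x - h n * y) = h n * y by ring, abs_mul, abs_of_pos (hhpos n)]
          rw [this]
          calc h n * |y| ≤ h n * T :=
                mul_le_mul_of_nonneg_left hy (hhpos n).le
            _ < (min η 1 / T) * T :=
                mul_lt_mul_of_pos_right (hN n hn) hT0
            _ = min η 1 := by field_simp
            _ ≤ η := min_le_left _ _
        have hδ := hηuc x hxK (x - h n * y) hmem hdist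
        rw [Real.dist_eq] at hδ
        have hfless : fY x - fY (x - h n * y) ≤ δ' :=
          le_of_lt (lt_of_le_of_lt (le_abs_self _) hδ)
        have hgy := hgnonneg n y
        have hind0y := hind0 y
        nlinarith [mul_le_mul_of_nonneg_left hfless hgy,
          mul_nonneg (mul_nonneg hM (by positivity : (0:ℝ) ≤ c₁ * r n ^ 2)) hind0y]
      · have hindy : ind y = Fmin y := by
          rw [hind, indicator_of_mem (by simpa using not_le.mp hy)]
        have h1 : g n y * fY x ≤ M * (c₁ * r n ^ 2 * Fmin y) := by
          calc g n y * fY x ≤ g n y * M :=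
                mul_le_mul_of_nonneg_left (hfYbd x) (hgnonneg n y)
            _ = M * g n y := mul_comm _ _
            _ ≤ M * (c₁ * r n ^ 2 * Fmin y) :=
                mul_le_mul_of_nonneg_left (hgF n y) hM
        rw [hindy]
        nlinarith [mul_nonneg (hgnonneg n y) (hfYnonneg (x - h n * y)),
          mul_nonneg hδ'0.le (hgnonneg n y)]
    -- integrability of LHS
    have hindint : Integrable ind := Fmin_integrable.indicator hmeasT
    have hfx : Integrable (fun y : ℝ => g n y * fY x) := (hgint n).mul_const (fY x)
    have ha : Integrable (fun y : ℝ => δ' * g n y) := (hgint n).const_mul δ'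
    have hb : Integrable (fun y : ℝ => M * (c₁ * r n ^ 2) * ind y) :=
      hindint.const_mul _
    have hab : Integrable (fun y : ℝ => δ' * g n y + M * (c₁ * r n ^ 2) * ind y) :=
      ha.add hb
    have hLint : Integrable (fun y : ℝ =>
        g n y * fY x - (δ' * g n y + M * (c₁ * r n ^ 2) * ind y)) := hfx.sub hab
    have hmono := integral_mono hLint (hprodint n x) hpt
    have hLval : (∫ y : ℝ, (g n y * fY x - (δ' * g n y + M * (c₁ * r n ^ 2) * ind y)))
        = (∫ y : ℝ, g n y) * fY x - (δ' * (∫ y : ℝ, g n y)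
            + M * (c₁ * r n ^ 2) * ∫ y in {y : ℝ | T < |y|}, Fmin y) := by
      rw [integral_sub hfx hab, integral_add ha hb,
        integral_mul_const, integral_const_mul, integral_const_mul,
        integral_indicator hmeasT]
    rw [hLval] at hmono
    -- final arithmetic
    have hGm : c₀ * r n ^ 2 * m ≤ (∫ y : ℝ, g n y) * fY x :=
      mul_le_mul (hglow n) (hmle x hx) hm0 (hg0 n)
    have hδG : δ' * (∫ y : ℝ, g n y) ≤ ε / 2 * r n ^ 2 := by
      have h1 : δ' * (∫ y : ℝ, g n y) ≤ δ' * (c₁ * r n ^ 2 * (2 * Real.pi)) :=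
        mul_le_mul_of_nonneg_left (hgub n) hδ'0.le
      have h2 : δ' * (c₁ * (2 * Real.pi)) ≤ ε / 2 := by
        rw [hδ', div_mul_eq_mul_div, div_le_div_iff₀ (by positivity) two_pos]
        nlinarith [mul_pos hε hπ, mul_pos (mul_pos hε hc₁) hπ]
      nlinarith [sq_nonneg (r n)]
    have htail0 : 0 ≤ ∫ y in {y : ℝ | T < |y|}, Fmin y :=
      setIntegral_nonneg hmeasT fun y _ => Fmin_nonneg y
    have hMtail : M * (c₁ * r n ^ 2) * (∫ y in {y : ℝ | T < |y|}, Fmin y)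
        ≤ ε / 2 * r n ^ 2 := by
      have h2 : M * c₁ * ε' ≤ ε / 2 := by
        rw [hε', mul_comm, div_mul_eq_mul_div, div_le_div_iff₀ (by positivity) two_pos]
        nlinarith [mul_nonneg (mul_nonneg hM hc₁.le) hε.le]
      have h3 : M * c₁ * (∫ y in {y : ℝ | T < |y|}, Fmin y) ≤ ε / 2 :=
        le_trans (mul_le_mul_of_nonneg_left htail (mul_nonneg hM hc₁.le)) h2
      nlinarith [mul_le_mul_of_nonneg_right h3 (sq_nonneg (r n))]
    have e1 : (c₀ * m - ε) * r n ^ 2 = c₀ * r n ^ 2 * m - ε * r n ^ 2 := by ring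
    have e2 : ε * r n ^ 2 = ε / 2 * r n ^ 2 + ε / 2 * r n ^ 2 := by ring
    rw [e1]
    linarith
  -- construct the error sequence
  set S : ℕ → Set ℝ := fun n =>
    (fun x => (∫ y : ℝ, g n y * fY (x - h n * y)) / r n ^ 2) '' I with hS
  have hSne : ∀ n, (S n).Nonempty := fun n => hIne.image _
  have hSbdd : ∀ n, BddBelow (S n) := by
    intro n
    refine ⟨0, ?_⟩
    rintro _ ⟨x, hx, rfl⟩
    exact div_nonneg (hprod0 n x) (by positivity)
  refine ⟨fun n => max 0 (c₀ * m - sInf (S n)), ?_, ?_⟩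
  · rw [Metric.tendsto_atTop]
    intro ε hε
    obtain ⟨N, hN⟩ := key (ε / 2) (by linarith)
    refine ⟨N, fun n hn => ?_⟩
    rw [Real.dist_eq, sub_zero, abs_of_nonneg (le_max_left _ _)]
    have hinf : c₀ * m - ε / 2 ≤ sInf (S n) := by
      refine le_csInf (hSne n) ?_
      rintro _ ⟨x, hx, rfl⟩
      rw [le_div_iff₀ (pow_pos (hrpos n) 2)]
      exact hN n hn x hx
    calc max 0 (c₀ * m - sInf (S n)) ≤ max 0 (ε / 2) := by
          exact max_le_max le_rfl (by linarith)
      _ = ε / 2 := max_eq_right (by linarith)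
      _ < ε := by linarith
  · intro n x hx
    have hle : sInf (S n) ≤ (∫ y : ℝ, g n y * fY (x - h n * y)) / r n ^ 2 :=
      csInf_le (hSbdd n) (mem_image_of_mem _ hx)
    have h1 : c₀ * m - max 0 (c₀ * m - sInf (S n)) ≤ sInf (S n) := by
      have := le_max_right 0 (c₀ * m - sInf (S n))
      linarith
    have h2 : c₀ * m - max 0 (c₀ * m - sInf (S n))
        ≤ (∫ y : ℝ, g n y * fY (x - h n * y)) / r n ^ 2 := le_trans h1 hle
    rw [le_div_iff₀ (pow_pos (hrpos n) 2)] at h2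
    exact h2
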